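/- Let r₁, r₂, r₃ ∈ ℝ³ be constant vectors, s₁, s₂, s₃ ∈ ℝ constants, M_r = Σᵢ sᵢ rᵢ rᵢᵀ, and let γ_Ω, k_Ω > 0. Let R, R̂ : ℝ → SO(3) be differentiable, b_Ω ∈ ℝ³ constant, b̂_Ω : ℝ → ℝ³ differentiable, and Ω : ℝ → ℝ³. Define vᵢ = Rᵀ rᵢ, v̂ᵢ = R̂ᵀ rᵢ, w_Ω = −(k_Ω/2) Σᵢ sᵢ R̂ (vᵢ × v̂ᵢ), b̃_Ω = b_Ω − b̂_Ω, and R̃ = R R̂ᵀ. Suppose Ṙ = R[Ω]_×, R̂' = R̂[Ω + b̃_Ω]_× − [w_Ω]_× R̂, and b̂_Ω' = −(γ_Ω/2) Σᵢ sᵢ (vᵢ × v̂ᵢ). Then the Lyapunov function L₁ = 2‖M_r R̃‖_I + (1/(2γ_Ω))‖b̃_Ω‖² satisfies L̇₁ = −k_Ω ‖vex(P_a(M_r R̃))‖². -/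

import Mathlib

open Matrix

attribute [local instance] Matrix.frobeniusNormedAddCommGroup Matrix.frobeniusNormedSpace
attribute [local instance] Matrix.frobeniusNormedRing Matrix.frobeniusNormedAlgebra

/-- The hat map `[y]ₓ`: the 3×3 skew-symmetric matrix with `[y]ₓ x = y × x`. -/
def hat (y : Fin 3 → ℝ) : Matrix (Fin 3) (Fin 3) ℝ :=
  !![0, -y 2, y 1; y 2, 0, -y 0; -y 1, y 0, 0]

/-- `vex(𝒫ₐ(A)) = ½ [A₃₂ − A₂₃, A₁₃ − A₃₁, A₂₁ − A₁₂]ᵀ`. -/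
noncomputable def vexPa (A : Matrix (Fin 3) (Fin 3) ℝ) : Fin 3 → ℝ :=
  ![(A 2 1 - A 1 2) / 2, (A 0 2 - A 2 0) / 2, (A 1 0 - A 0 1) / 2]

/-- `‖M R‖_I = ¼ Tr(M (I₃ − R))`. -/
noncomputable def normI (M R : Matrix (Fin 3) (Fin 3) ℝ) : ℝ :=
  (M * (1 - R)).trace / 4

theorem hat_transpose (y : Fin 3 → ℝ) : (hat y)ᵀ = -hat y := by
  ext i j; fin_cases i <;> fin_cases j <;> simp [hat, Matrix.transpose_apply] <;> ring

theorem hat_add (x y : Fin 3 → ℝ) : hat (x + y) = hat x + hat y := by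
  ext i j; fin_cases i <;> fin_cases j <;> simp [hat] <;> ring

theorem hat_mulVec (y x : Fin 3 → ℝ) : (hat y).mulVec x = crossProduct y x := by
  funext i; fin_cases i <;>
    simp [hat, crossProduct, Matrix.mulVec, dotProduct, Fin.sum_univ_three] <;> ring

theorem cross_mulVec_det (A : Matrix (Fin 3) (Fin 3) ℝ) (a b : Fin 3 → ℝ) :
    Aᵀ.mulVec (crossProduct (A.mulVec a) (A.mulVec b)) = A.det • crossProduct a b := by
  funext i; fin_cases i <;>
    simp [crossProduct, Matrix.mulVec, dotProduct, Fin.sum_univ_three,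
      Matrix.det_fin_three, Matrix.transpose_apply] <;> ring

theorem rot_cross {A : Matrix (Fin 3) (Fin 3) ℝ} (h1 : Aᵀ * A = 1) (h2 : A.det = 1)
    (a b : Fin 3 → ℝ) :
    A.mulVec (crossProduct a b) = crossProduct (A.mulVec a) (A.mulVec b) := by
  have h3 : A * Aᵀ = 1 := mul_eq_one_comm.mp h1
  have h := cross_mulVec_det A a b
  rw [h2, one_smul] at h
  rw [← h, Matrix.mulVec_mulVec, h3, Matrix.one_mulVec]

theorem trace_mul_hat (M : Matrix (Fin 3) (Fin 3) ℝ) (y : Fin 3 → ℝ) :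
    (M * hat y).trace = -2 * (vexPa M ⬝ᵥ y) := by
  simp [Matrix.trace, Matrix.mul_apply, Fin.sum_univ_three, hat, vexPa,
    dotProduct, Matrix.diag]
  ring

theorem trace_vecMulVec (a c : Fin 3 → ℝ) : (vecMulVec a c).trace = a ⬝ᵥ c := by
  simp [Matrix.trace, Matrix.vecMulVec, dotProduct, Matrix.diag, Fin.sum_univ_three]

theorem vecMulVec_mul (a c : Fin 3 → ℝ) (B : Matrix (Fin 3) (Fin 3) ℝ) :
    vecMulVec a c * B = vecMulVec a (Bᵀ.mulVec c) := by
  ext i j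
  simp [Matrix.mul_apply, Matrix.vecMulVec, Matrix.mulVec, dotProduct,
    Fin.sum_univ_three, Matrix.transpose_apply]
  ring

theorem vexPa_vecMulVec (a c : Fin 3 → ℝ) :
    vexPa (vecMulVec a c) = -((1:ℝ)/2) • crossProduct a c := by
  funext i; fin_cases i <;> simp [vexPa, vecMulVec, crossProduct] <;> ring

theorem triple (a b c : Fin 3 → ℝ) :
    a ⬝ᵥ crossProduct b c = b ⬝ᵥ crossProduct c a := by
  simp [crossProduct, dotProduct, Fin.sum_univ_three]; ring

theorem HasDerivAt.matrixTranspose {f : ℝ → Matrix (Fin 3) (Fin 3) ℝ}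
    {f' : Matrix (Fin 3) (Fin 3) ℝ} {t : ℝ} (h : HasDerivAt f f' t) :
    HasDerivAt (fun t => (f t)ᵀ) f'ᵀ t := by
  have := ((LinearMap.toContinuousLinearMap
      ((Matrix.transposeLinearEquiv (Fin 3) (Fin 3) ℝ ℝ).toLinearMap)).hasFDerivAt
      (x := f t)).comp_hasDerivAt t h
  exact this

theorem hasDerivAt_traceMul (Mr : Matrix (Fin 3) (Fin 3) ℝ)
    {f : ℝ → Matrix (Fin 3) (Fin 3) ℝ} {f' : Matrix (Fin 3) (Fin 3) ℝ} {t : ℝ}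
    (h : HasDerivAt f f' t) :
    HasDerivAt (fun t => (Mr * f t).trace) (Mr * f').trace t := by
  have := ((LinearMap.toContinuousLinearMap
      ((Matrix.traceLinearMap (Fin 3) ℝ ℝ).comp (LinearMap.mulLeft ℝ Mr))).hasFDerivAt
      (x := f t)).comp_hasDerivAt t h
  exact this

theorem vexPa_smul (a : ℝ) (A : Matrix (Fin 3) (Fin 3) ℝ) :
    vexPa (a • A) = a • vexPa A := by
  funext i; fin_cases i <;> simp [vexPa] <;> ring

theorem vexPa_add (A B : Matrix (Fin 3) (Fin 3) ℝ) :
    vexPa (A + B) = vexPa A + vexPa B := by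
  funext i; fin_cases i <;> simp [vexPa] <;> ring

theorem vexPa_sum {ι : Type*} (S : Finset ι) (f : ι → Matrix (Fin 3) (Fin 3) ℝ) :
    vexPa (∑ i ∈ S, f i) = ∑ i ∈ S, vexPa (f i) :=
  map_sum (AddMonoidHom.mk' vexPa vexPa_add) f S

theorem mulVec_sum_smul (A : Matrix (Fin 3) (Fin 3) ℝ) (s : Fin 3 → ℝ)
    (f : Fin 3 → Fin 3 → ℝ) :
    A.mulVec (∑ i, s i • f i) = ∑ i, s i • A.mulVec (f i) := by
  funext j
  simp [Matrix.mulVec, dotProduct, Fin.sum_univ_three, Finset.sum_apply]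
  ring

theorem dotProduct_sum_smul (b : Fin 3 → ℝ) (s : Fin 3 → ℝ) (f : Fin 3 → Fin 3 → ℝ) :
    b ⬝ᵥ (∑ i, s i • f i) = ∑ i, s i * (b ⬝ᵥ f i) := by
  simp [dotProduct, Fin.sum_univ_three, Finset.sum_apply]
  ring

/-- along the closed-loop attitude/bias estimation dynamics, the
Lyapunov function `L₁ = 2‖M_r R̃‖_I + (1/(2γ_Ω))‖b̃_Ω‖²` satisfies
`L̇₁ = −k_Ω ‖vex(𝒫ₐ(M_r R̃))‖²`. -/
theorem lyapunov_attitude_deriv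
    (r : Fin 3 → Fin 3 → ℝ) (s : Fin 3 → ℝ)
    (Mr : Matrix (Fin 3) (Fin 3) ℝ)
    (hMr : Mr = ∑ i, s i • vecMulVec (r i) (r i))
    (γΩ kΩ : ℝ) (hγ : 0 < γΩ) (hk : 0 < kΩ)
    (R Rhat : ℝ → Matrix (Fin 3) (Fin 3) ℝ)
    (hRSO : ∀ t, (R t)ᵀ * R t = 1 ∧ (R t).det = 1)
    (hRhatSO : ∀ t, (Rhat t)ᵀ * Rhat t = 1 ∧ (Rhat t).det = 1)
    (bΩ : Fin 3 → ℝ) (bhatΩ : ℝ → Fin 3 → ℝ) (Ω : ℝ → Fin 3 → ℝ)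
    (v vhat : Fin 3 → ℝ → Fin 3 → ℝ)
    (hv : ∀ i t, v i t = (R t)ᵀ.mulVec (r i))
    (hvhat : ∀ i t, vhat i t = (Rhat t)ᵀ.mulVec (r i))
    (wΩ : ℝ → Fin 3 → ℝ)
    (hwΩ : ∀ t, wΩ t =
      -((kΩ / 2) • ∑ i, s i • (Rhat t).mulVec (crossProduct (v i t) (vhat i t))))
    (btildeΩ : ℝ → Fin 3 → ℝ) (hbtilde : ∀ t, btildeΩ t = bΩ - bhatΩ t)
    (Rtilde : ℝ → Matrix (Fin 3) (Fin 3) ℝ)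
    (hRtilde : ∀ t, Rtilde t = R t * (Rhat t)ᵀ)
    (hR : ∀ t, HasDerivAt R (R t * hat (Ω t)) t)
    (hRhat : ∀ t, HasDerivAt Rhat
      (Rhat t * hat (Ω t + btildeΩ t) - hat (wΩ t) * Rhat t) t)
    (hbhat : ∀ t, HasDerivAt bhatΩ
      (-((γΩ / 2) • ∑ i, s i • crossProduct (v i t) (vhat i t))) t)
    (L₁ : ℝ → ℝ)
    (hL₁ : ∀ t, L₁ t =
      2 * normI Mr (Rtilde t) + (1 / (2 * γΩ)) * (btildeΩ t ⬝ᵥ btildeΩ t)) :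
    ∀ t, HasDerivAt L₁
      (-kΩ * (vexPa (Mr * Rtilde t) ⬝ᵥ vexPa (Mr * Rtilde t))) t := by
  intro t
  obtain ⟨hQo, hQd⟩ := hRSO t
  obtain ⟨hQho, hQhd⟩ := hRhatSO t
  have hQhQh : Rhat t * (Rhat t)ᵀ = 1 := mul_eq_one_comm.mp hQho
  set Q := R t with hQ
  set Qh := Rhat t with hQhdef
  set b := btildeΩ t with hbdef
  set c : Fin 3 → ℝ := ∑ i, s i • (crossProduct (v i t) (vhat i t) : Fin 3 → ℝ) with hc
  set D : Matrix (Fin 3) (Fin 3) ℝ :=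
    (Q * hat (Ω t)) * Qhᵀ + Q * (Qh * hat (Ω t + b) - hat (wΩ t) * Qh)ᵀ with hD
  -- derivative of Rtilde
  have hRt' : HasDerivAt Rtilde D t := by
    have he : Rtilde = fun u => R u * (Rhat u)ᵀ := funext hRtilde
    rw [he, hD]
    exact (hR t).mul (hRhat t).matrixTranspose
  -- simplified form of D
  have hD2 : D = -(Q * hat b * Qhᵀ) + (Q * Qhᵀ) * hat (wΩ t) := by
    rw [hD, Matrix.transpose_sub, Matrix.transpose_mul, Matrix.transpose_mul,
      hat_transpose, hat_transpose, hat_add]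
    noncomm_ring
  -- derivative of the trace part
  have htr : HasDerivAt (fun u => (Mr * (1 - Rtilde u)).trace) (-(Mr * D).trace) t := by
    have h1 := hasDerivAt_traceMul Mr hRt'
    have h2 := (hasDerivAt_const t Mr.trace).sub h1
    have he : (fun u => (Mr * (1 - Rtilde u)).trace)
        = fun u => Mr.trace - (Mr * Rtilde u).trace := by
      funext u; rw [Matrix.mul_sub, Matrix.mul_one, Matrix.trace_sub]
    rw [he]
    exact h2.congr_deriv (zero_sub _)
  -- derivative of each component of btilde
  have hbti : ∀ i, HasDerivAt (fun u => btildeΩ u i) ((γΩ / 2) * c i) t := by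
    intro i
    have h1 : HasDerivAt (fun u => bhatΩ u i)
        ((-((γΩ / 2) • ∑ j, s j • (crossProduct (v j t) (vhat j t) : Fin 3 → ℝ))) i) t :=
      hasDerivAt_pi.mp (hbhat t) i
    have h2 := (hasDerivAt_const t (bΩ i)).sub h1
    have he : (fun u => btildeΩ u i) = fun u => bΩ i - bhatΩ u i := by
      funext u; rw [hbtilde u]; rfl
    rw [he]
    refine h2.congr_deriv ?_
    simp [hc, Pi.smul_apply]
  -- derivative of the dot product part
  have hdot : HasDerivAt (fun u => btildeΩ u ⬝ᵥ btildeΩ u) (γΩ * (b ⬝ᵥ c)) t := by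
    have he : (fun u => btildeΩ u ⬝ᵥ btildeΩ u)
        = fun u => ∑ i, btildeΩ u i * btildeΩ u i := by
      funext u; rfl
    rw [he]
    have h1 := HasDerivAt.sum (fun i (_ : i ∈ Finset.univ) => (hbti i).mul (hbti i))
    refine h1.congr_deriv ?_
    simp only [dotProduct, Finset.mul_sum]
    apply Finset.sum_congr rfl
    intro i _
    ring
  -- assemble derivative of L₁
  have hL : L₁ = fun u =>
      2 * ((Mr * (1 - Rtilde u)).trace / 4)
        + (1 / (2 * γΩ)) * (btildeΩ u ⬝ᵥ btildeΩ u) := by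
    funext u; rw [hL₁ u]; rfl
  have hder : HasDerivAt L₁
      (2 * (-(Mr * D).trace / 4) + (1 / (2 * γΩ)) * (γΩ * (b ⬝ᵥ c))) t := by
    rw [hL]
    exact ((htr.div_const 4).const_mul 2).add (hdot.const_mul (1 / (2 * γΩ)))
  -- now the algebra
  -- Term A : trace (Mr * (Q * hat b * Qhᵀ)) = -(b ⬝ᵥ c)
  have hTermA : (Mr * (Q * hat b * Qhᵀ)).trace = -(b ⬝ᵥ c) := by
    rw [hMr, Finset.sum_mul, Matrix.trace_sum, hc, dotProduct_sum_smul, ← Finset.sum_neg_distrib]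
    apply Finset.sum_congr rfl
    intro i _
    rw [smul_mul_assoc, Matrix.trace_smul, _root_.vecMulVec_mul, _root_.trace_vecMulVec]
    have ht : (Q * hat b * Qhᵀ)ᵀ = Qh * (-hat b) * Qᵀ := by
      rw [Matrix.transpose_mul, Matrix.transpose_mul, hat_transpose,
        Matrix.transpose_transpose]
      noncomm_ring
    rw [ht]
    have : (Qh * -hat b * Qᵀ).mulVec (r i) = Qh.mulVec ((-hat b).mulVec (Qᵀ.mulVec (r i))) := by
      rw [← Matrix.mulVec_mulVec, ← Matrix.mulVec_mulVec]
    rw [this, ← hv i t, Matrix.dotProduct_mulVec, ← Matrix.mulVec_transpose, hvhat i t]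
    rw [Matrix.neg_mulVec, hat_mulVec, dotProduct_neg]
    rw [show ((Qh)ᵀ.mulVec (r i) : Fin 3 → ℝ) = vhat i t from (hvhat i t).symm]
    rw [triple (vhat i t) b (v i t)]
    simp [smul_eq_mul]
  -- Key identity : vexPa (Mr * (Q * Qhᵀ)) = (1/2) • Qh *ᵥ c
  have hK : vexPa (Mr * (Q * Qhᵀ)) = ((1:ℝ)/2) • Qh.mulVec c := by
    rw [hMr, Finset.sum_mul, vexPa_sum, hc, mulVec_sum_smul, Finset.smul_sum]
    apply Finset.sum_congr rfl
    intro i _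
    rw [smul_mul_assoc, vexPa_smul, _root_.vecMulVec_mul, vexPa_vecMulVec]
    have h1 : (Q * Qhᵀ)ᵀ.mulVec (r i) = Qh.mulVec (v i t) := by
      rw [Matrix.transpose_mul, Matrix.transpose_transpose, ← Matrix.mulVec_mulVec, ← hv i t]
    have h2 : Qh.mulVec (vhat i t) = r i := by
      rw [hvhat i t, Matrix.mulVec_mulVec, hQhQh, Matrix.one_mulVec]
    have h3 : (crossProduct (r i) (Qh.mulVec (v i t)) : Fin 3 → ℝ)
        = -(Qh.mulVec (crossProduct (v i t) (vhat i t))) := by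
      rw [← h2, ← rot_cross hQho hQhd, ← Matrix.mulVec_neg]
      congr 1
      rw [cross_anticomm]
    rw [h1, h3]
    funext j
    simp [Pi.smul_apply, Pi.neg_apply]
    ring
  -- express wΩ t
  have hw : wΩ t = -(kΩ • vexPa (Mr * (Q * Qhᵀ))) := by
    rw [hwΩ t, hK, ← mulVec_sum_smul, ← hc]
    funext j
    simp [Pi.smul_apply, smul_eq_mul]
    ring
  -- Term B
  have hTermB : (Mr * ((Q * Qhᵀ) * hat (wΩ t))).trace
      = 2 * kΩ * (vexPa (Mr * (Q * Qhᵀ)) ⬝ᵥ vexPa (Mr * (Q * Qhᵀ))) := by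
    rw [← Matrix.mul_assoc, trace_mul_hat, hw]
    simp [dotProduct_neg, dotProduct_smul, smul_eq_mul]
    ring
  -- total trace of Mr * D
  have htrD : (Mr * D).trace
      = b ⬝ᵥ c + 2 * kΩ * (vexPa (Mr * (Q * Qhᵀ)) ⬝ᵥ vexPa (Mr * (Q * Qhᵀ))) := by
    rw [hD2, Matrix.mul_add, Matrix.trace_add, Matrix.mul_neg, Matrix.trace_neg,
      hTermA, hTermB]
    ring
  -- finish
  have hfinal : 2 * (-(Mr * D).trace / 4) + (1 / (2 * γΩ)) * (γΩ * (b ⬝ᵥ c))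
      = -kΩ * (vexPa (Mr * Rtilde t) ⬝ᵥ vexPa (Mr * Rtilde t)) := by
    rw [htrD, hRtilde t, ← hQ, ← hQhdef]
    field_simp
    ring
  rw [← hfinal]
  exact hder
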